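/- Lipschitz kernel from monotone representation: Let f, and a real number y < y' be given, with f: ℝ → ℝ nondecreasing and integrable against Gaussians. Let π_x = law(f(G+y)) and π_{x'} = law(f(G+y')) where G ~ N(0,1), and set x = E[f(G+y)], x' = E[f(G+y')]. Then the 1-Wasserstein distance satisfies W₁(π_x, π_{x'}) ≤ x' − x. -/

import Mathlib

open MeasureTheory ProbabilityTheory

/-- The 1-Wasserstein distance between two measures on `ℝ`, as an infimum over couplings. -/
noncomputable def W1 (α β : Measure ℝ) : ℝ :=
  sInf {r | ∃ q : Measure (ℝ × ℝ), q.map Prod.fst = α ∧ q.map Prod.snd = β ∧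
    r = ∫ p, |p.1 - p.2| ∂q}

/-- Lipschitz kernel from a monotone representation: with `π_x = law f(G+y)`,
`π_{x'} = law f(G+y')`, `x = E[f(G+y)]`, `x' = E[f(G+y')]` and `y < y'`, one has
`W₁(π_x, π_{x'}) ≤ x' − x`. -/
theorem stmt11 {Ω : Type*} [MeasurableSpace Ω] (P : Measure Ω) [IsProbabilityMeasure P]
    (G : Ω → ℝ) (hG : Measurable G) (hlaw : P.map G = gaussianReal 0 1)
    (f : ℝ → ℝ) (hf : Monotone f) (y y' : ℝ) (hyy' : y < y')
    (h1 : Integrable (fun ω => f (G ω + y)) P)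
    (h2 : Integrable (fun ω => f (G ω + y')) P) :
    W1 (P.map fun ω => f (G ω + y)) (P.map fun ω => f (G ω + y'))
      ≤ (∫ ω, f (G ω + y') ∂P) - ∫ ω, f (G ω + y) ∂P := by
  have hfm : Measurable f := hf.measurable
  have hm1 : Measurable (fun ω => f (G ω + y)) := hfm.comp (hG.add_const y)
  have hm2 : Measurable (fun ω => f (G ω + y')) := hfm.comp (hG.add_const y')
  have hmp : Measurable (fun ω => (f (G ω + y), f (G ω + y'))) := hm1.prodMk hm2
  set q : Measure (ℝ × ℝ) := P.map (fun ω => (f (G ω + y), f (G ω + y'))) with hq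
  have hle : ∀ ω, f (G ω + y) ≤ f (G ω + y') := fun ω => hf (by linarith)
  have hint : ∫ p, |p.1 - p.2| ∂q = (∫ ω, f (G ω + y') ∂P) - ∫ ω, f (G ω + y) ∂P := by
    rw [hq, integral_map (f := fun p : ℝ × ℝ => |p.1 - p.2|) hmp.aemeasurable
      ((measurable_fst.sub measurable_snd).abs).aestronglyMeasurable]
    have : (fun ω => |(f (G ω + y), f (G ω + y')).1 - (f (G ω + y), f (G ω + y')).2|)
        = fun ω => f (G ω + y') - f (G ω + y) := by
      funext ω
      simp only
      rw [abs_sub_comm, abs_of_nonneg (by linarith [hle ω])]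
    rw [this, integral_sub h2 h1]
  apply csInf_le
  · exact ⟨0, fun r ⟨q', _, _, hr⟩ => hr ▸ integral_nonneg (fun p => abs_nonneg _)⟩
  · refine ⟨q, ?_, ?_, hint.symm⟩
    · rw [hq, Measure.map_map measurable_fst hmp]; rfl
    · rw [hq, Measure.map_map measurable_snd hmp]; rfl
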